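/- The full Z3-graded Grassmann algebra on N grade-1 generators θ_i and N grade-2 generators θ̄_i (with the relations aX = Xa for grade-0 a and A Ā = j Ā A for grade-1 A, grade-2 Ā) has complex dimension (3 + 4N + 9N² + 2N³)/3. -/

import Mathlib

noncomputable section

/-- `j = e^{2πi/3}`, a primitive cube root of unity. -/
def jj : ℂ := Complex.exp (2 * Real.pi * Complex.I / 3)

namespace Z3

/-- Generators: `Sum.inl i` is the grade-1 generator `θ_i`,
`Sum.inr i` is the grade-2 generator `θ̄_i`. -/
abbrev Gen (N : ℕ) := Fin N ⊕ Fin N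

/-- Grade of a generator. -/
def genGrade {N : ℕ} : Gen N → ZMod 3
  | Sum.inl _ => 1
  | Sum.inr _ => 2

/-- Grade of a word in the generators (sum of the grades mod 3). -/
def wGrade {N : ℕ} (w : List (Gen N)) : ZMod 3 := (w.map genGrade).sum

/-- The product in the free algebra of the letters of a word. -/
def wProd {N : ℕ} (w : List (Gen N)) : FreeAlgebra ℂ (Gen N) :=
  (w.map (FreeAlgebra.ι ℂ)).prod

/-- Defining relations of the `ℤ₃`-graded Grassmann algebra: homogeneous
grade-0 elements are central, and `A Ā = j Ā A` for `A` of grade 1 and `Ā` of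
grade 2. -/
inductive Rel (N : ℕ) : FreeAlgebra ℂ (Gen N) → FreeAlgebra ℂ (Gen N) → Prop
  | central (w₁ w₂ : List (Gen N)) (h : wGrade w₁ = 0) :
      Rel N (wProd w₁ * wProd w₂) (wProd w₂ * wProd w₁)
  | comm12 (w₁ w₂ : List (Gen N)) (h₁ : wGrade w₁ = 1) (h₂ : wGrade w₂ = 2) :
      Rel N (wProd w₁ * wProd w₂) (jj • (wProd w₂ * wProd w₁))

/-- The `ℤ₃`-graded Grassmann algebra on `N` grade-1 generators `θ_i` and `N`
grade-2 generators `θ̄_i`. -/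
abbrev G (N : ℕ) := RingQuot (Rel N)

/-- The canonical quotient map. -/
def mk (N : ℕ) : FreeAlgebra ℂ (Gen N) →ₐ[ℂ] G N := RingQuot.mkAlgHom ℂ (Rel N)

/-- The homogeneous component of grade `g`: the span of (classes of) words of
grade `g`. -/
def 𝒢 {N : ℕ} (g : ZMod 3) : Submodule ℂ (G N) :=
  Submodule.span ℂ {x | ∃ w : List (Gen N), wGrade w = g ∧ x = mk N (wProd w)}

/-- The "body" map on the free algebra, sending every generator to `0`. -/
def bodyF (N : ℕ) : FreeAlgebra ℂ (Gen N) →ₐ[ℂ] ℂ :=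
  FreeAlgebra.lift ℂ (fun _ : Gen N => (0 : ℂ))

lemma bodyF_wProd_ne_nil {N : ℕ} (w : List (Gen N)) (hw : w ≠ []) :
    bodyF N (wProd w) = 0 := by
  cases w with
  | nil => exact absurd rfl hw
  | cons a t =>
      simp only [wProd, List.map_cons, List.prod_cons, map_mul, bodyF,
        FreeAlgebra.lift_ι_apply, zero_mul]

lemma wGrade_ne_nil {N : ℕ} {w : List (Gen N)} {g : ZMod 3} (h : wGrade w = g)
    (hg : g ≠ 0) : w ≠ [] := by
  intro e; subst e; simp [wGrade] at h; exact hg h.symm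

/-- The body (augmentation) map of the Grassmann algebra: coefficient of the
unit `I`. -/
def bodyA (N : ℕ) : G N →ₐ[ℂ] ℂ :=
  RingQuot.liftAlgHom ℂ ⟨bodyF N, by
    intro x y h
    cases h with
    | central w₁ w₂ h => simp only [map_mul]; ring
    | comm12 w₁ w₂ h₁ h₂ =>
        have h1 : bodyF N (wProd w₁) = 0 :=
          bodyF_wProd_ne_nil w₁ (wGrade_ne_nil h₁ (by decide))
        simp [map_mul, map_smul, h1]⟩

end Z3

lemma jj_pow_three : jj ^ 3 = 1 := by
  rw [jj, ← Complex.exp_nat_mul]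
  have h3 : (3:ℕ) * (2 * (Real.pi:ℂ) * Complex.I / 3) = 2 * Real.pi * Complex.I := by
    push_cast; ring
  rw [h3, Complex.exp_two_pi_mul_I]

lemma jj_ne_one : jj ≠ 1 := by
  rw [jj, Ne, Complex.exp_eq_one_iff]
  push_neg
  intro n h
  have hπ : (Real.pi : ℂ) ≠ 0 := by simpa using Real.pi_ne_zero
  have hI : Complex.I ≠ 0 := Complex.I_ne_zero
  field_simp at h
  have h1 : (2:ℂ) * Real.pi * Complex.I * (1 - 3 * n) = 0 := by
    ring_nf; ring_nf at h; linear_combination (2*(Real.pi:ℂ)*Complex.I) * h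
  rcases mul_eq_zero.1 h1 with h2 | h2
  · rcases mul_eq_zero.1 h2 with h3 | h3
    · norm_num at h3
    · exact hI h3
  · have h6 : ((1 - 3*n : ℤ) : ℂ) = 0 := by push_cast; linear_combination h2
    have : (1 - 3*n : ℤ) = 0 := by exact_mod_cast h6
    omega

lemma jj_cube : jj * (jj * jj) = 1 := by
  have h := jj_pow_three
  linear_combination h

namespace Z3

variable {N : ℕ}

/-- Abbreviation for the class of a word. -/
def mw (N : ℕ) (w : List (Gen N)) : G N := mk N (wProd w)

lemma wProd_nil : wProd ([] : List (Gen N)) = 1 := rfl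

lemma wProd_cons (g : Gen N) (w : List (Gen N)) :
    wProd (g :: w) = FreeAlgebra.ι ℂ g * wProd w := by
  simp [wProd]

lemma wProd_append (w₁ w₂ : List (Gen N)) :
    wProd (w₁ ++ w₂) = wProd w₁ * wProd w₂ := by
  simp [wProd]

lemma mw_append (w₁ w₂ : List (Gen N)) : mw N (w₁ ++ w₂) = mw N w₁ * mw N w₂ := by
  simp [mw, wProd_append, map_mul]

lemma mw_nil : mw N [] = 1 := by simp [mw, wProd_nil, map_one]

lemma comm12G (w₁ w₂ : List (Gen N)) (h₁ : wGrade w₁ = 1) (h₂ : wGrade w₂ = 2) :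
    mw N (w₁ ++ w₂) = jj • mw N (w₂ ++ w₁) := by
  have h := RingQuot.mkAlgHom_rel ℂ (Rel.comm12 w₁ w₂ h₁ h₂)
  simpa [mw, mk, wProd_append, map_mul, map_smul] using h

lemma centralG (w₁ w₂ : List (Gen N)) (h : wGrade w₁ = 0) :
    mw N (w₁ ++ w₂) = mw N (w₂ ++ w₁) := by
  have hh := RingQuot.mkAlgHom_rel ℂ (Rel.central w₁ w₂ h)
  simpa [mw, mk, wProd_append, map_mul] using hh

end Z3
namespace Z3

variable {N : ℕ}

lemma eq_zero_of_eq_jj_smul {x : G N} (h : x = jj • x) : x = 0 := by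
  have h1 : (1 - jj) • x = 0 := by
    have e : (1 - jj) • x = (1:ℂ) • x - jj • x := sub_smul 1 jj x
    rw [e, one_smul, ← h, sub_self]
  have h2 : (1 - jj) ≠ 0 := sub_ne_zero_of_ne (Ne.symm jj_ne_one)
  have := congrArg (fun y => (1 - jj)⁻¹ • y) h1
  simpa [smul_smul, inv_mul_cancel₀ h2] using this

lemma zero_of_sq {x y : G N} (hxy : x = (jj * jj) • y) (hyx : y = (jj * jj) • x) :
    x = 0 := by
  apply eq_zero_of_eq_jj_smul
  calc x = (jj*jj) • ((jj*jj) • x) := by rw [← hyx, ← hxy]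
    _ = ((jj*jj) * (jj*jj)) • x := by rw [smul_smul]
    _ = jj • x := by
        congr 1
        linear_combination jj * jj_cube

section words
variable (a b c d : Fin N)

lemma grade_one_l : wGrade [Sum.inl a] = 1 := by simp [wGrade, genGrade]
lemma grade_two_r : wGrade [Sum.inr a] = 2 := by simp [wGrade, genGrade]

lemma tripCycL : mw N [Sum.inl a, Sum.inl b, Sum.inl c]
    = jj • mw N [Sum.inl b, Sum.inl c, Sum.inl a] := by
  simpa using comm12G [Sum.inl a] [Sum.inl b, Sum.inl c]
    (by simp [wGrade, genGrade]) (by simp [wGrade, genGrade]; decide)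

lemma tripCycR : mw N [Sum.inr a, Sum.inr b, Sum.inr c]
    = jj • mw N [Sum.inr c, Sum.inr a, Sum.inr b] := by
  simpa using comm12G [Sum.inr a, Sum.inr b] [Sum.inr c]
    (by simp [wGrade, genGrade]; decide) (by simp [wGrade, genGrade])

lemma swapG : mw N [Sum.inr b, Sum.inl a] = (jj * jj) • mw N [Sum.inl a, Sum.inr b] := by
  have h := comm12G [Sum.inl a] [Sum.inr b]
    (by simp [wGrade, genGrade]) (by simp [wGrade, genGrade])
  simp only [List.cons_append, List.nil_append] at h
  rw [h, smul_smul]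
  have h3 : (jj * jj) * jj = 1 := by linear_combination jj_cube
  rw [h3, one_smul]

lemma zLLR : mw N [Sum.inl a, Sum.inl b, Sum.inr c] = 0 := by
  have key : ∀ a b : Fin N, mw N [Sum.inl a, Sum.inl b, Sum.inr c]
      = (jj*jj) • mw N [Sum.inl b, Sum.inl a, Sum.inr c] := by
    intro a b
    have h1 : mw N [Sum.inl b, Sum.inr c, Sum.inl a]
        = mw N [Sum.inl a, Sum.inl b, Sum.inr c] := by
      simpa using centralG [Sum.inl b, Sum.inr c] [Sum.inl a]
        (by simp [wGrade, genGrade]; decide)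
    have h2 : mw N [Sum.inl b, Sum.inr c, Sum.inl a]
        = (jj*jj) • mw N [Sum.inl b, Sum.inl a, Sum.inr c] := by
      have e1 : mw N [Sum.inl b, Sum.inr c, Sum.inl a]
          = mw N [Sum.inl b] * mw N [Sum.inr c, Sum.inl a] := by
        simpa using mw_append [Sum.inl b] [Sum.inr c, Sum.inl a]
      have e2 : mw N [Sum.inl b, Sum.inl a, Sum.inr c]
          = mw N [Sum.inl b] * mw N [Sum.inl a, Sum.inr c] := by
        simpa using mw_append [Sum.inl b] [Sum.inl a, Sum.inr c]
      rw [e1, e2, swapG, mul_smul_comm]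
    rw [← h1, h2]
  exact zero_of_sq (key a b) (key b a)

lemma zLRR : mw N [Sum.inl a, Sum.inr b, Sum.inr c] = 0 := by
  have key : ∀ b c : Fin N, mw N [Sum.inl a, Sum.inr b, Sum.inr c]
      = (jj*jj) • mw N [Sum.inl a, Sum.inr c, Sum.inr b] := by
    intro b c
    have h1 : mw N [Sum.inl a, Sum.inr b, Sum.inr c]
        = mw N [Sum.inr c, Sum.inl a, Sum.inr b] := by
      simpa using centralG [Sum.inl a, Sum.inr b] [Sum.inr c]
        (by simp [wGrade, genGrade]; decide)
    have h2 : mw N [Sum.inr c, Sum.inl a, Sum.inr b]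
        = (jj*jj) • mw N [Sum.inl a, Sum.inr c, Sum.inr b] := by
      have e1 : mw N [Sum.inr c, Sum.inl a, Sum.inr b]
          = mw N [Sum.inr c, Sum.inl a] * mw N [Sum.inr b] := by
        simpa using mw_append [Sum.inr c, Sum.inl a] [Sum.inr b]
      have e2 : mw N [Sum.inl a, Sum.inr c, Sum.inr b]
          = mw N [Sum.inl a, Sum.inr c] * mw N [Sum.inr b] := by
        simpa using mw_append [Sum.inl a, Sum.inr c] [Sum.inr b]
      rw [e1, e2, swapG, smul_mul_assoc]
    rw [h1, h2]
  exact zero_of_sq (key b c) (key c b)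

lemma zRLL : mw N [Sum.inr a, Sum.inl b, Sum.inl c] = 0 := by
  have e1 : mw N [Sum.inr a, Sum.inl b, Sum.inl c]
      = mw N [Sum.inr a, Sum.inl b] * mw N [Sum.inl c] := by
    simpa using mw_append [Sum.inr a, Sum.inl b] [Sum.inl c]
  have e1' : mw N [Sum.inl b, Sum.inr a, Sum.inl c]
      = mw N [Sum.inl b, Sum.inr a] * mw N [Sum.inl c] := by
    simpa using mw_append [Sum.inl b, Sum.inr a] [Sum.inl c]
  have e2 : mw N [Sum.inl b, Sum.inr a, Sum.inl c]
      = mw N [Sum.inl b] * mw N [Sum.inr a, Sum.inl c] := by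
    simpa using mw_append [Sum.inl b] [Sum.inr a, Sum.inl c]
  have e3 : mw N [Sum.inl b, Sum.inl c, Sum.inr a]
      = mw N [Sum.inl b] * mw N [Sum.inl c, Sum.inr a] := by
    simpa using mw_append [Sum.inl b] [Sum.inl c, Sum.inr a]
  rw [e1, swapG, smul_mul_assoc, ← e1', e2, swapG, mul_smul_comm, ← e3, zLLR]
  simp

lemma zRLR : mw N [Sum.inr a, Sum.inl b, Sum.inr c] = 0 := by
  have e1 : mw N [Sum.inr a, Sum.inl b, Sum.inr c]
      = mw N [Sum.inr a, Sum.inl b] * mw N [Sum.inr c] := by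
    simpa using mw_append [Sum.inr a, Sum.inl b] [Sum.inr c]
  have e2 : mw N [Sum.inl b, Sum.inr a, Sum.inr c]
      = mw N [Sum.inl b, Sum.inr a] * mw N [Sum.inr c] := by
    simpa using mw_append [Sum.inl b, Sum.inr a] [Sum.inr c]
  rw [e1, swapG, smul_mul_assoc, ← e2, zLRR, smul_zero]

lemma zL4 : mw N [Sum.inl a, Sum.inl b, Sum.inl c, Sum.inl d] = 0 := by
  have moveA : ∀ a b c d : Fin N, mw N [Sum.inl a, Sum.inl b, Sum.inl c, Sum.inl d]
      = jj • mw N [Sum.inl b, Sum.inl c, Sum.inl a, Sum.inl d] := by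
    intro a b c d
    have e1 : mw N [Sum.inl a, Sum.inl b, Sum.inl c, Sum.inl d]
        = mw N [Sum.inl a, Sum.inl b, Sum.inl c] * mw N [Sum.inl d] := by
      simpa using mw_append [Sum.inl a, Sum.inl b, Sum.inl c] [Sum.inl d]
    have e2 : mw N [Sum.inl b, Sum.inl c, Sum.inl a, Sum.inl d]
        = mw N [Sum.inl b, Sum.inl c, Sum.inl a] * mw N [Sum.inl d] := by
      simpa using mw_append [Sum.inl b, Sum.inl c, Sum.inl a] [Sum.inl d]
    rw [e1, e2, tripCycL, smul_mul_assoc]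
  have moveB : ∀ a b c d : Fin N, mw N [Sum.inl a, Sum.inl b, Sum.inl c, Sum.inl d]
      = jj • mw N [Sum.inl a, Sum.inl c, Sum.inl d, Sum.inl b] := by
    intro a b c d
    have e1 : mw N [Sum.inl a, Sum.inl b, Sum.inl c, Sum.inl d]
        = mw N [Sum.inl a] * mw N [Sum.inl b, Sum.inl c, Sum.inl d] := by
      simpa using mw_append [Sum.inl a] [Sum.inl b, Sum.inl c, Sum.inl d]
    have e2 : mw N [Sum.inl a, Sum.inl c, Sum.inl d, Sum.inl b]
        = mw N [Sum.inl a] * mw N [Sum.inl c, Sum.inl d, Sum.inl b] := by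
      simpa using mw_append [Sum.inl a] [Sum.inl c, Sum.inl d, Sum.inl b]
    rw [e1, e2, tripCycL, mul_smul_comm]
  have comp : ∀ a b c d : Fin N, mw N [Sum.inl a, Sum.inl b, Sum.inl c, Sum.inl d]
      = (jj*jj) • mw N [Sum.inl b, Sum.inl a, Sum.inl d, Sum.inl c] := by
    intro a b c d
    rw [moveA a b c d, moveB b c a d, smul_smul]
  exact zero_of_sq (comp a b c d) (comp b a d c)

lemma zR4 : mw N [Sum.inr a, Sum.inr b, Sum.inr c, Sum.inr d] = 0 := by
  have moveA : ∀ a b c d : Fin N, mw N [Sum.inr a, Sum.inr b, Sum.inr c, Sum.inr d]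
      = jj • mw N [Sum.inr c, Sum.inr a, Sum.inr b, Sum.inr d] := by
    intro a b c d
    have e1 : mw N [Sum.inr a, Sum.inr b, Sum.inr c, Sum.inr d]
        = mw N [Sum.inr a, Sum.inr b, Sum.inr c] * mw N [Sum.inr d] := by
      simpa using mw_append [Sum.inr a, Sum.inr b, Sum.inr c] [Sum.inr d]
    have e2 : mw N [Sum.inr c, Sum.inr a, Sum.inr b, Sum.inr d]
        = mw N [Sum.inr c, Sum.inr a, Sum.inr b] * mw N [Sum.inr d] := by
      simpa using mw_append [Sum.inr c, Sum.inr a, Sum.inr b] [Sum.inr d]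
    rw [e1, e2, tripCycR, smul_mul_assoc]
  have moveB : ∀ a b c d : Fin N, mw N [Sum.inr a, Sum.inr b, Sum.inr c, Sum.inr d]
      = jj • mw N [Sum.inr a, Sum.inr d, Sum.inr b, Sum.inr c] := by
    intro a b c d
    have e1 : mw N [Sum.inr a, Sum.inr b, Sum.inr c, Sum.inr d]
        = mw N [Sum.inr a] * mw N [Sum.inr b, Sum.inr c, Sum.inr d] := by
      simpa using mw_append [Sum.inr a] [Sum.inr b, Sum.inr c, Sum.inr d]
    have e2 : mw N [Sum.inr a, Sum.inr d, Sum.inr b, Sum.inr c]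
        = mw N [Sum.inr a] * mw N [Sum.inr d, Sum.inr b, Sum.inr c] := by
      simpa using mw_append [Sum.inr a] [Sum.inr d, Sum.inr b, Sum.inr c]
    rw [e1, e2, tripCycR, mul_smul_comm]
  have comp : ∀ a b c d : Fin N, mw N [Sum.inr a, Sum.inr b, Sum.inr c, Sum.inr d]
      = (jj*jj) • mw N [Sum.inr c, Sum.inr d, Sum.inr a, Sum.inr b] := by
    intro a b c d
    rw [moveA a b c d, moveB c a b d, smul_smul]
  exact zero_of_sq (comp a b c d) (comp c d a b)

lemma zL3const : mw N [Sum.inl a, Sum.inl a, Sum.inl a] = 0 :=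
  eq_zero_of_eq_jj_smul (tripCycL a a a)

lemma zR3const : mw N [Sum.inr a, Sum.inr a, Sum.inr a] = 0 :=
  eq_zero_of_eq_jj_smul (tripCycR a a a)

end words
end Z3
namespace Z3

variable {N : ℕ}

/-- Triples of indices. -/
abbrev T3 (N : ℕ) := Fin N × Fin N × Fin N

/-- Cyclic rotation of a triple. -/
def rot (t : T3 N) : T3 N := (t.2.1, t.2.2, t.1)

lemma rot_rot_rot (t : T3 N) : rot (rot (rot t)) = t := rfl

lemma rot_injective : Function.Injective (rot (N := N)) := by
  intro s t h
  have h2 := congrArg (fun x => rot (rot x)) h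
  simpa only [rot_rot_rot] using h2

/-- Injective encoding of a triple as a natural number. -/
def enc (t : T3 N) : ℕ := (finProdFinEquiv (finProdFinEquiv (t.1, t.2.1), t.2.2)).val

lemma enc_injective : Function.Injective (enc (N := N)) := by
  rintro ⟨a, b, c⟩ ⟨a', b', c'⟩ h
  have h1 := finProdFinEquiv.injective (Fin.val_injective h)
  have hc : c = c' := congrArg Prod.snd h1
  have h2 := finProdFinEquiv.injective (congrArg Prod.fst h1)
  have ha : a = a' := congrArg Prod.fst h2
  have hb : b = b' := congrArg Prod.snd h2
  subst ha; subst hb; subst hc; rfl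

/-- A triple is canonical if it is not rotation-invariant and is minimal
among its rotations. -/
def IsCanon (t : T3 N) : Prop :=
  rot t ≠ t ∧ enc t ≤ enc (rot t) ∧ enc t ≤ enc (rot (rot t))

instance : DecidablePred (IsCanon (N := N)) := fun t => by
  unfold IsCanon; infer_instance

lemma rot2_ne (t : T3 N) (h : rot t ≠ t) : rot (rot t) ≠ t := by
  intro e
  exact h ((congrArg rot e).symm.trans (rot_rot_rot t)).symm.symm

lemma rot2_ne' (t : T3 N) (h : rot t ≠ t) : rot (rot t) ≠ rot t :=
  fun e => h (rot_injective e)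

lemma canon_unique1 (t : T3 N) (h1 : IsCanon t) (h2 : IsCanon (rot t)) : False := by
  have ha : enc t ≤ enc (rot t) := h1.2.1
  have hb : enc (rot t) ≤ enc t := by
    have := h2.2.2
    rwa [rot_rot_rot] at this
  exact h1.1 (enc_injective (le_antisymm hb ha))

lemma canon_unique2 (t : T3 N) (h1 : IsCanon t) (h2 : IsCanon (rot (rot t))) : False := by
  have ha : enc t ≤ enc (rot (rot t)) := h1.2.2
  have hb : enc (rot (rot t)) ≤ enc t := by
    have := h2.2.1
    rwa [rot_rot_rot] at this
  exact rot2_ne t h1.1 (enc_injective (le_antisymm hb ha))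

lemma canon_exists (t : T3 N) (h : rot t ≠ t) :
    IsCanon t ∨ IsCanon (rot t) ∨ IsCanon (rot (rot t)) := by
  have hne1 : rot (rot t) ≠ rot t := rot2_ne' t h
  have hne2 : rot (rot (rot t)) ≠ rot (rot t) := by
    rw [rot_rot_rot]; exact fun e => (rot2_ne t h) e.symm
  rcases le_total (enc t) (enc (rot t)) with h01 | h10
  · rcases le_total (enc t) (enc (rot (rot t))) with h02 | h20
    · exact Or.inl ⟨h, h01, h02⟩
    · refine Or.inr (Or.inr ⟨hne2, ?_, ?_⟩)
      · rw [rot_rot_rot]; exact h20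
      · rw [rot_rot_rot]; exact le_trans h20 h01
  · rcases le_total (enc (rot t)) (enc (rot (rot t))) with h12 | h21
    · refine Or.inr (Or.inl ⟨hne1, h12, ?_⟩)
      rw [rot_rot_rot]; exact h10
    · refine Or.inr (Or.inr ⟨hne2, ?_, ?_⟩)
      · rw [rot_rot_rot]; exact le_trans h21 h10
      · rw [rot_rot_rot]; exact h21

/-- Canonical (cyclically reduced) triples. -/
abbrev Canon (N : ℕ) := {t : T3 N // IsCanon t}

/-- The rotation orbit relation. -/
def Orb (s s' : T3 N) : Prop := s' = s ∨ s' = rot s ∨ s' = rot (rot s)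

lemma orb_rot_right (s x : T3 N) (h : Orb s x) : Orb s (rot x) := by
  rcases h with rfl | rfl | rfl
  · exact Or.inr (Or.inl rfl)
  · exact Or.inr (Or.inr rfl)
  · exact Or.inl (rot_rot_rot s)

lemma orb_symm (s s' : T3 N) (h : Orb s s') : Orb s' s := by
  rcases h with rfl | rfl | rfl
  · exact Or.inl rfl
  · exact Or.inr (Or.inr (rot_rot_rot s).symm)
  · exact Or.inr (Or.inl (rot_rot_rot s).symm)

lemma orb_trans (s x y : T3 N) (h1 : Orb s x) (h2 : Orb x y) : Orb s y := by
  rcases h2 with rfl | rfl | rfl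
  · exact h1
  · exact orb_rot_right s x h1
  · exact orb_rot_right s (rot x) (orb_rot_right s x h1)

/-- Rotation a bounded number of times. -/
def rotk (k : Fin 3) (t : T3 N) : T3 N :=
  if k = 0 then t else if k = 1 then rot t else rot (rot t)

lemma orb_rotk (k : Fin 3) (t : T3 N) : Orb t (rotk k t) := by
  unfold rotk
  split_ifs
  · exact Or.inl rfl
  · exact Or.inr (Or.inl rfl)
  · exact Or.inr (Or.inr rfl)

lemma orbit_canon_unique (s s' : T3 N) (h : IsCanon s) (h' : IsCanon s')
    (ho : Orb s s') : s = s' := by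
  rcases ho with rfl | rfl | rfl
  · rfl
  · exact (canon_unique1 s h h').elim
  · exact (canon_unique2 s h h').elim

lemma rotk_inj (s : T3 N) (hs : rot s ≠ s) (k k' : Fin 3)
    (h : rotk k s = rotk k' s) : k = k' := by
  have d1 : s ≠ rot s := fun e => hs e.symm
  have d2 : s ≠ rot (rot s) := fun e => rot2_ne s hs e.symm
  have d3 : rot s ≠ rot (rot s) := fun e => rot2_ne' s hs e.symm
  fin_cases k <;> fin_cases k' <;>
    simp only [rotk, show ((0:Fin 3) = 0) = True from by simp,
      if_true] at h ⊢ <;>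
    first
      | rfl
      | (exfalso; revert h; norm_num; tauto)
      | (revert h; norm_num; tauto)

lemma card_aux : N * N * N = 3 * Fintype.card (Canon N) + N := by
  classical
  have hconst : Fintype.card {t : T3 N // rot t = t} = N := by
    have e : {t : T3 N // rot t = t} ≃ Fin N := by
      refine ⟨fun t => t.1.1, fun a => ⟨(a, a, a), rfl⟩, ?_, ?_⟩
      · rintro ⟨⟨a, b, c⟩, hh⟩
        have h1 : b = a ∧ c = b ∧ a = c := by
          simpa [rot, Prod.ext_iff] using hh
        obtain ⟨e1, e2, e3⟩ := h1
        subst e1; subst e2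
        rfl
      · intro a; rfl
    simp [Fintype.card_congr e]
  have hne : Fintype.card {t : T3 N // ¬ rot t = t} = 3 * Fintype.card (Canon N) := by
    have hbij : Function.Bijective
        (fun p : Fin 3 × Canon N =>
          (⟨rotk p.1 p.2.1, by
            rcases p with ⟨k, ⟨t, ht⟩⟩
            have h1 : rot t ≠ t := ht.1
            have h2 : ¬ rot (rot t) = rot t := rot2_ne' t h1
            have h3 : ¬ rot (rot (rot t)) = rot (rot t) := by
              rw [rot_rot_rot]; exact fun e => (rot2_ne t h1) e.symm
            simp only [rotk]
            split_ifs <;> assumption⟩ : {t : T3 N // ¬ rot t = t})) := by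
      constructor
      · rintro ⟨k, ⟨s, hs⟩⟩ ⟨k', ⟨s', hs'⟩⟩ hh
        have heq : rotk k s = rotk k' s' := congrArg Subtype.val hh
        have horb : s = s' := by
          apply orbit_canon_unique s s' hs hs'
          have o1 : Orb s (rotk k s) := orb_rotk k s
          have o2 : Orb s' (rotk k' s') := orb_rotk k' s'
          rw [heq] at o1
          exact orb_trans s (rotk k' s') s' o1 (orb_symm s' (rotk k' s') o2)
        subst horb
        have hk : k = k' := rotk_inj s hs.1 k k' heq
        subst hk
        rfl
      · rintro ⟨t, ht⟩
        rcases canon_exists t ht with hc | hc | hc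
        · exact ⟨(0, ⟨t, hc⟩), by apply Subtype.ext; simp [rotk]⟩
        · refine ⟨(2, ⟨rot t, hc⟩), ?_⟩
          apply Subtype.ext
          simp [rotk, rot_rot_rot]
        · refine ⟨(1, ⟨rot (rot t), hc⟩), ?_⟩
          apply Subtype.ext
          simp [rotk, rot_rot_rot]
    rw [← Fintype.card_of_bijective hbij]
    simp
  have hcompl : Fintype.card {t : T3 N // ¬ rot t = t}
      = Fintype.card (T3 N) - Fintype.card {t : T3 N // rot t = t} :=
    Fintype.card_subtype_compl _
  have hle : Fintype.card {t : T3 N // rot t = t} ≤ Fintype.card (T3 N) :=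
    Fintype.card_subtype_le _
  have hT3 : Fintype.card (T3 N) = N * N * N := by
    simp [Fintype.card_prod]; ring
  omega

end Z3
namespace Z3

variable {N : ℕ}

/-- Index type for the normal-form basis: unit; θ; θ̄; θθ; θ̄θ̄; θθ̄;
canonical θθθ; canonical θ̄θ̄θ̄. -/
abbrev Idx (N : ℕ) :=
  (Unit ⊕ Fin N ⊕ Fin N) ⊕
  ((Fin N × Fin N) ⊕ (Fin N × Fin N) ⊕ (Fin N × Fin N)) ⊕
  (Canon N ⊕ Canon N)

def iU : Idx N := Sum.inl (Sum.inl ())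
def iL (a : Fin N) : Idx N := Sum.inl (Sum.inr (Sum.inl a))
def iR (a : Fin N) : Idx N := Sum.inl (Sum.inr (Sum.inr a))
def iLL (p : Fin N × Fin N) : Idx N := Sum.inr (Sum.inl (Sum.inl p))
def iRR (p : Fin N × Fin N) : Idx N := Sum.inr (Sum.inl (Sum.inr (Sum.inl p)))
def iLR (p : Fin N × Fin N) : Idx N := Sum.inr (Sum.inl (Sum.inr (Sum.inr p)))
def iTL (c : Canon N) : Idx N := Sum.inr (Sum.inr (Sum.inl c))
def iTR (c : Canon N) : Idx N := Sum.inr (Sum.inr (Sum.inr c))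

/-- The model vector space. -/
abbrev V (N : ℕ) := Idx N → ℂ

/-- Basis vectors of the model. -/
def e (i : Idx N) : V N := Pi.basisFun ℂ (Idx N) i

/-- Rotation count needed to canonize. -/
def cpow (t : T3 N) : ℕ :=
  if IsCanon t then 0 else if IsCanon (rot t) then 1 else 2

/-- Canonical representative of the rotation orbit. -/
def crep (t : T3 N) : T3 N :=
  if IsCanon t then t else if IsCanon (rot t) then rot t else rot (rot t)

lemma crep_canon (t : T3 N) (h : ¬ rot t = t) : IsCanon (crep t) := by
  unfold crep
  split_ifs with h1 h2
  · exact h1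
  · exact h2
  · rcases canon_exists t h with hc | hc | hc
    · exact absurd hc h1
    · exact absurd hc h2
    · exact hc

/-- The model value of a word `θ_a θ_b θ_c`. -/
def TL (t : T3 N) : V N :=
  if h : rot t = t then 0
  else jj ^ cpow t • e (iTL ⟨crep t, crep_canon t h⟩)

/-- The model value of a word `θ̄_a θ̄_b θ̄_c`. -/
def TR (t : T3 N) : V N :=
  if h : rot t = t then 0
  else jj ^ (2 * cpow t) • e (iTR ⟨crep t, crep_canon t h⟩)

/-- The exclusive trichotomy of canonical positions. -/
lemma canon_cases (t : T3 N) (h : ¬ rot t = t) :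
    (IsCanon t ∧ ¬ IsCanon (rot t) ∧ ¬ IsCanon (rot (rot t))) ∨
    (¬ IsCanon t ∧ IsCanon (rot t) ∧ ¬ IsCanon (rot (rot t))) ∨
    (¬ IsCanon t ∧ ¬ IsCanon (rot t) ∧ IsCanon (rot (rot t))) := by
  rcases canon_exists t h with hc | hc | hc
  · exact Or.inl ⟨hc, fun h2 => canon_unique1 t hc h2, fun h2 => canon_unique2 t hc h2⟩
  · refine Or.inr (Or.inl ⟨fun h2 => canon_unique1 t h2 hc, hc,
      fun h2 => canon_unique1 (rot t) hc h2⟩)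
  · refine Or.inr (Or.inr ⟨fun h2 => canon_unique2 t h2 hc,
      fun h2 => canon_unique1 (rot t) h2 hc, hc⟩)

lemma rot_ne_rot (t : T3 N) (h : ¬ rot t = t) : ¬ rot (rot t) = rot t :=
  rot2_ne' t h

lemma rot2_ne_rot2 (t : T3 N) (h : ¬ rot t = t) : ¬ rot (rot (rot t)) = rot (rot t) := by
  rw [rot_rot_rot]
  exact fun ee => (rot2_ne t h) ee.symm

lemma TL_rot (t : T3 N) : TL t = jj • TL (rot t) := by
  by_cases h : rot t = t
  · have h2 : rot (rot t) = rot t := by simp [h]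
    rw [TL, TL, dif_pos h, dif_pos h2, smul_zero]
  · have h2 : ¬ rot (rot t) = rot t := rot_ne_rot t h
    rw [TL, TL, dif_neg h, dif_neg h2]
    rcases canon_cases t h with ⟨c0, c1, c2⟩ | ⟨c0, c1, c2⟩ | ⟨c0, c1, c2⟩
    · have e1 : cpow t = 0 := by simp [cpow, c0]
      have e2 : cpow (rot t) = 2 := by simp [cpow, c1, c2]
      have e3 : crep t = t := by simp [crep, c0]
      have e4 : crep (rot t) = t := by simp [crep, c1, c2, rot_rot_rot]
      have e5 : (⟨crep t, crep_canon t h⟩ : Canon N)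
          = ⟨crep (rot t), crep_canon (rot t) h2⟩ := by
        apply Subtype.ext
        show crep t = crep (rot t)
        rw [e3, e4]
      have hs : jj * jj ^ (2:ℕ) = jj ^ (0:ℕ) := by
        have h3 := jj_pow_three
        linear_combination h3
      rw [e5, e1, e2, smul_smul, hs]
    · have e1 : cpow t = 1 := by simp [cpow, c0, c1]
      have e2 : cpow (rot t) = 0 := by simp [cpow, c1]
      have e3 : crep t = rot t := by simp [crep, c0, c1]
      have e4 : crep (rot t) = rot t := by simp [crep, c1]
      have e5 : (⟨crep t, crep_canon t h⟩ : Canon N)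
          = ⟨crep (rot t), crep_canon (rot t) h2⟩ := by
        apply Subtype.ext
        show crep t = crep (rot t)
        rw [e3, e4]
      have hs : jj * jj ^ (0:ℕ) = jj ^ (1:ℕ) := by ring
      rw [e5, e1, e2, smul_smul, hs]
    · have e1 : cpow t = 2 := by simp [cpow, c0, c1]
      have e2 : cpow (rot t) = 1 := by simp [cpow, c1, c2]
      have e3 : crep t = rot (rot t) := by simp [crep, c0, c1]
      have e4 : crep (rot t) = rot (rot t) := by simp [crep, c1, c2]
      have e5 : (⟨crep t, crep_canon t h⟩ : Canon N)
          = ⟨crep (rot t), crep_canon (rot t) h2⟩ := by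
        apply Subtype.ext
        show crep t = crep (rot t)
        rw [e3, e4]
      have hs : jj * jj ^ (1:ℕ) = jj ^ (2:ℕ) := by ring
      rw [e5, e1, e2, smul_smul, hs]

lemma TR_rot (t : T3 N) : TR t = jj • TR (rot (rot t)) := by
  by_cases h : rot t = t
  · have h2 : rot (rot (rot t)) = rot (rot t) := by simp [h]
    rw [TR, TR, dif_pos h, dif_pos h2, smul_zero]
  · have h2 : ¬ rot (rot (rot t)) = rot (rot t) := rot2_ne_rot2 t h
    rw [TR, TR, dif_neg h, dif_neg h2]
    rcases canon_cases t h with ⟨c0, c1, c2⟩ | ⟨c0, c1, c2⟩ | ⟨c0, c1, c2⟩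
    · have e1 : cpow t = 0 := by simp [cpow, c0]
      have e2 : cpow (rot (rot t)) = 1 := by simp [cpow, c2, rot_rot_rot, c0]
      have e3 : crep t = t := by simp [crep, c0]
      have e4 : crep (rot (rot t)) = t := by simp [crep, c2, rot_rot_rot, c0]
      have e5 : (⟨crep t, crep_canon t h⟩ : Canon N)
          = ⟨crep (rot (rot t)), crep_canon (rot (rot t)) h2⟩ := by
        apply Subtype.ext
        show crep t = crep (rot (rot t))
        rw [e3, e4]
      have hs : jj * jj ^ (2*1:ℕ) = jj ^ (2*0:ℕ) := by
        have h3 := jj_pow_three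
        linear_combination h3
      rw [e5, e1, e2, smul_smul, hs]
    · have e1 : cpow t = 1 := by simp [cpow, c0, c1]
      have e2 : cpow (rot (rot t)) = 2 := by simp [cpow, c2, rot_rot_rot, c0, c1]
      have e3 : crep t = rot t := by simp [crep, c0, c1]
      have e4 : crep (rot (rot t)) = rot t := by
        simp [crep, c2, rot_rot_rot, c0, c1]
      have e5 : (⟨crep t, crep_canon t h⟩ : Canon N)
          = ⟨crep (rot (rot t)), crep_canon (rot (rot t)) h2⟩ := by
        apply Subtype.ext
        show crep t = crep (rot (rot t))
        rw [e3, e4]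
      have hs : jj * jj ^ (2*2:ℕ) = jj ^ (2*1:ℕ) := by
        have h3 := jj_pow_three
        linear_combination jj ^ 2 * h3
      rw [e5, e1, e2, smul_smul, hs]
    · have e1 : cpow t = 2 := by simp [cpow, c0, c1]
      have e2 : cpow (rot (rot t)) = 0 := by simp [cpow, c2]
      have e3 : crep t = rot (rot t) := by simp [crep, c0, c1]
      have e4 : crep (rot (rot t)) = rot (rot t) := by simp [crep, c2]
      have e5 : (⟨crep t, crep_canon t h⟩ : Canon N)
          = ⟨crep (rot (rot t)), crep_canon (rot (rot t)) h2⟩ := by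
        apply Subtype.ext
        show crep t = crep (rot (rot t))
        rw [e3, e4]
      have hs : jj * jj ^ (2*0:ℕ) = jj ^ (2*2:ℕ) := by
        have h3 := jj_pow_three
        linear_combination (-jj) * h3
      rw [e5, e1, e2, smul_smul, hs]

/-- Structure constants of the model algebra. -/
def mm : Idx N → Idx N → V N
  | Sum.inl (Sum.inl _), k => e k
  | i, Sum.inl (Sum.inl _) => e i
  | Sum.inl (Sum.inr (Sum.inl a)), Sum.inl (Sum.inr (Sum.inl b)) => e (iLL (a, b))
  | Sum.inl (Sum.inr (Sum.inl a)), Sum.inl (Sum.inr (Sum.inr b)) => e (iLR (a, b))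
  | Sum.inl (Sum.inr (Sum.inr a)), Sum.inl (Sum.inr (Sum.inl b)) =>
      (jj * jj) • e (iLR (b, a))
  | Sum.inl (Sum.inr (Sum.inr a)), Sum.inl (Sum.inr (Sum.inr b)) => e (iRR (a, b))
  | Sum.inl (Sum.inr (Sum.inl a)), Sum.inr (Sum.inl (Sum.inl p)) => TL (a, p)
  | Sum.inr (Sum.inl (Sum.inl p)), Sum.inl (Sum.inr (Sum.inl c)) => TL (p.1, p.2, c)
  | Sum.inl (Sum.inr (Sum.inr a)), Sum.inr (Sum.inl (Sum.inr (Sum.inl p))) => TR (a, p)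
  | Sum.inr (Sum.inl (Sum.inr (Sum.inl p))), Sum.inl (Sum.inr (Sum.inr c)) =>
      TR (p.1, p.2, c)
  | _, _ => 0

/-- The model multiplication, as a bilinear map. -/
def m : V N →ₗ[ℂ] V N →ₗ[ℂ] V N :=
  (Pi.basisFun ℂ (Idx N)).constr ℂ fun i =>
    (Pi.basisFun ℂ (Idx N)).constr ℂ fun k => mm i k

lemma m_ee (i k : Idx N) : m (e i) (e k) = mm i k := by
  simp only [m, e, Module.Basis.constr_basis]

end Z3
namespace Z3

variable {N : ℕ}

lemma mm_iU_left (k : Idx N) : mm iU k = e k := by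
  rcases k with (u | a | a) | (p | p | p) | c | c <;> rfl

lemma mm_iU_right (i : Idx N) : mm i iU = e i := by
  rcases i with (u | a | a) | (p | p | p) | c | c <;> rfl

lemma m_eU_left (x : V N) : m (e iU) x = x := by
  have h : (m (e (iU : Idx N))) = LinearMap.id := by
    apply (Pi.basisFun ℂ (Idx N)).ext
    intro k
    show m (e iU) (e k) = e k
    rw [m_ee, mm_iU_left]
  rw [h]; rfl

lemma m_eU_right (x : V N) : m x (e iU) = x := by
  have h : (LinearMap.flip (m (N := N))) (e iU) = LinearMap.id := by
    apply (Pi.basisFun ℂ (Idx N)).ext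
    intro i
    show (LinearMap.flip m) (e iU) (e i) = e i
    rw [LinearMap.flip_apply]
    show m (e i) (e iU) = e i
    rw [m_ee, mm_iU_right]
  have := congrArg (fun φ => φ x) h
  simpa using this

lemma mm_iTL_zero (c : Canon N) (l : Idx N) (h : l ≠ iU) : mm (iTL c) l = 0 := by
  rcases l with (u | a | a) | (p | p | p) | d | d <;>
    first
      | rfl
      | exact absurd rfl h

lemma mm_iTR_zero (c : Canon N) (l : Idx N) (h : l ≠ iU) : mm (iTR c) l = 0 := by
  rcases l with (u | a | a) | (p | p | p) | d | d <;>
    first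
      | rfl
      | exact absurd rfl h

lemma mm_iTL_zero' (c : Canon N) (i : Idx N) (h : i ≠ iU) : mm i (iTL c) = 0 := by
  rcases i with (u | a | a) | (p | p | p) | d | d <;>
    first
      | rfl
      | exact absurd rfl h

lemma mm_iTR_zero' (c : Canon N) (i : Idx N) (h : i ≠ iU) : mm i (iTR c) = 0 := by
  rcases i with (u | a | a) | (p | p | p) | d | d <;>
    first
      | rfl
      | exact absurd rfl h

lemma m_TL_e_zero (t : T3 N) (l : Idx N) (h : l ≠ iU) : m (TL t) (e l) = 0 := by
  rw [TL]
  split_ifs with hh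
  · simp
  · rw [map_smul]
    simp [m_ee, mm_iTL_zero _ _ h]

lemma m_TR_e_zero (t : T3 N) (l : Idx N) (h : l ≠ iU) : m (TR t) (e l) = 0 := by
  rw [TR]
  split_ifs with hh
  · simp
  · rw [map_smul]
    simp [m_ee, mm_iTR_zero _ _ h]

lemma m_e_TL_zero (t : T3 N) (i : Idx N) (h : i ≠ iU) : m (e i) (TL t) = 0 := by
  rw [TL]
  split_ifs with hh
  · simp
  · rw [map_smul]
    simp [m_ee, mm_iTL_zero' _ _ h]

lemma m_e_TR_zero (t : T3 N) (i : Idx N) (h : i ≠ iU) : m (e i) (TR t) = 0 := by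
  rw [TR]
  split_ifs with hh
  · simp
  · rw [map_smul]
    simp [m_ee, mm_iTR_zero' _ _ h]

lemma m_eU_left' (u : Unit) (x : V N) : m (e (Sum.inl (Sum.inl u))) x = x := by
  cases u; exact m_eU_left x

lemma m_eU_right' (u : Unit) (x : V N) : m x (e (Sum.inl (Sum.inl u))) = x := by
  cases u; exact m_eU_right x

set_option maxHeartbeats 3200000 in
lemma massoc_basis (i k l : Idx N) :
    m (m (e i) (e k)) (e l) = m (e i) (m (e k) (e l)) := by
  rcases i with (⟨⟩ | a | a) | (p | p | p) | c | c <;>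
  rcases k with (⟨⟩ | b | b) | (q | q | q) | d | d <;>
  rcases l with (⟨⟩ | g | g) | (r | r | r) | s | s <;>
  simp [m_ee, mm, iU, iL, iR, iLL, iRR, iLR, iTL, iTR, m_eU_left, m_eU_right,
    m_eU_left', m_eU_right',
    map_smul, smul_smul, m_TL_e_zero, m_e_TL_zero, m_TR_e_zero, m_e_TR_zero] <;>
  repeat' first
    | rw [m_TL_e_zero _ _ (by simp [iU])]
    | rw [m_TR_e_zero _ _ (by simp [iU])]
    | rw [m_e_TL_zero _ _ (by simp [iU])]
    | rw [m_e_TR_zero _ _ (by simp [iU])]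

end Z3
namespace Z3

variable {N : ℕ}

/-- Left-iterated trilinear product. -/
def triL : V N →ₗ[ℂ] V N →ₗ[ℂ] V N →ₗ[ℂ] V N where
  toFun x := m.comp (m x)
  map_add' x x' := by
    refine LinearMap.ext fun y => LinearMap.ext fun z => ?_
    simp [map_add]
  map_smul' c x := by
    refine LinearMap.ext fun y => LinearMap.ext fun z => ?_
    simp [map_smul]

/-- Right-iterated trilinear product. -/
def triR : V N →ₗ[ℂ] V N →ₗ[ℂ] V N →ₗ[ℂ] V N where
  toFun x := (LinearMap.llcomp ℂ (V N) (V N) (V N) (m x)).comp m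
  map_add' x x' := by
    refine LinearMap.ext fun y => LinearMap.ext fun z => ?_
    simp [map_add]
  map_smul' c x := by
    refine LinearMap.ext fun y => LinearMap.ext fun z => ?_
    simp [map_smul]

lemma tri_eq : (triL : V N →ₗ[ℂ] _) = triR := by
  refine Module.Basis.ext (Pi.basisFun ℂ (Idx N)) fun i => ?_
  refine Module.Basis.ext (Pi.basisFun ℂ (Idx N)) fun k => ?_
  refine Module.Basis.ext (Pi.basisFun ℂ (Idx N)) fun l => ?_
  exact massoc_basis i k l

lemma massoc (x y z : V N) : m (m x y) z = m x (m y z) := by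
  have h := tri_eq (N := N)
  have h2 := DFunLike.congr_fun (DFunLike.congr_fun (DFunLike.congr_fun h x) y) z
  exact h2

/-- Grade of a basis index. -/
def gradeOf : Idx N → ZMod 3
  | Sum.inl (Sum.inl _) => 0
  | Sum.inl (Sum.inr (Sum.inl _)) => 1
  | Sum.inl (Sum.inr (Sum.inr _)) => 2
  | Sum.inr (Sum.inl (Sum.inl _)) => 2
  | Sum.inr (Sum.inl (Sum.inr (Sum.inl _))) => 1
  | Sum.inr (Sum.inl (Sum.inr (Sum.inr _))) => 0
  | Sum.inr (Sum.inr _) => 0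

/-- Homogeneous component of the model. -/
def Hom (g : ZMod 3) : Submodule ℂ (V N) :=
  Submodule.span ℂ {v | ∃ i, gradeOf i = g ∧ v = e i}

lemma e_mem_Hom {i : Idx N} {g : ZMod 3} (h : gradeOf i = g) : e i ∈ Hom g :=
  Submodule.subset_span ⟨i, h, rfl⟩

lemma TL_mem (t : T3 N) : TL t ∈ Hom (0 : ZMod 3) := by
  rw [TL]
  split_ifs
  · exact zero_mem _
  · exact Submodule.smul_mem _ _ (e_mem_Hom rfl)

lemma TR_mem (t : T3 N) : TR t ∈ Hom (0 : ZMod 3) := by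
  rw [TR]
  split_ifs
  · exact zero_mem _
  · exact Submodule.smul_mem _ _ (e_mem_Hom rfl)

lemma mm_grade (i k : Idx N) : mm i k ∈ Hom (gradeOf i + gradeOf k) := by
  rcases i with (⟨⟩ | a | a) | (p | p | p) | c | c <;>
  rcases k with (⟨⟩ | b | b) | (q | q | q) | d | d <;>
  simp only [mm]
  · exact e_mem_Hom rfl
  · exact e_mem_Hom rfl
  · exact e_mem_Hom rfl
  · exact e_mem_Hom rfl
  · exact e_mem_Hom rfl
  · exact e_mem_Hom rfl
  · exact e_mem_Hom rfl
  · exact e_mem_Hom rfl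
  · exact e_mem_Hom rfl
  · exact e_mem_Hom rfl
  · exact e_mem_Hom rfl
  · exact TL_mem _
  · exact zero_mem _
  · exact zero_mem _
  · exact zero_mem _
  · exact zero_mem _
  · exact e_mem_Hom rfl
  · exact Submodule.smul_mem _ _ (e_mem_Hom rfl)
  · exact e_mem_Hom rfl
  · exact zero_mem _
  · exact TR_mem _
  · exact zero_mem _
  · exact zero_mem _
  · exact zero_mem _
  · exact e_mem_Hom rfl
  · exact TL_mem _
  · exact zero_mem _
  · exact zero_mem _
  · exact zero_mem _
  · exact zero_mem _
  · exact zero_mem _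
  · exact zero_mem _
  · exact e_mem_Hom rfl
  · exact zero_mem _
  · exact TR_mem _
  · exact zero_mem _
  · exact zero_mem _
  · exact zero_mem _
  · exact zero_mem _
  · exact zero_mem _
  · exact e_mem_Hom rfl
  · exact zero_mem _
  · exact zero_mem _
  · exact zero_mem _
  · exact zero_mem _
  · exact zero_mem _
  · exact zero_mem _
  · exact zero_mem _
  · exact e_mem_Hom rfl
  · exact zero_mem _
  · exact zero_mem _
  · exact zero_mem _
  · exact zero_mem _
  · exact zero_mem _
  · exact zero_mem _
  · exact zero_mem _
  · exact e_mem_Hom rfl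
  · exact zero_mem _
  · exact zero_mem _
  · exact zero_mem _
  · exact zero_mem _
  · exact zero_mem _
  · exact zero_mem _
  · exact zero_mem _

lemma m_grade {g₁ g₂ : ZMod 3} {x y : V N} (hx : x ∈ Hom g₁) (hy : y ∈ Hom g₂) :
    m x y ∈ Hom (g₁ + g₂) := by
  induction hx using Submodule.span_induction with
  | mem x hx' =>
      obtain ⟨i, hgi, rfl⟩ := hx'
      induction hy using Submodule.span_induction with
      | mem y hy' =>
          obtain ⟨k, hgk, rfl⟩ := hy'
          rw [m_ee, ← hgi, ← hgk]
          exact mm_grade i k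
      | zero => simp only [map_zero]; exact zero_mem _
      | add y y' _ _ ih ih' => rw [map_add]; exact add_mem ih ih'
      | smul c y _ ih => rw [map_smul]; exact Submodule.smul_mem _ _ ih
  | zero => simp only [map_zero, LinearMap.zero_apply]; exact zero_mem _
  | add x x' _ _ ih ih' =>
      rw [map_add, LinearMap.add_apply]; exact add_mem ih ih'
  | smul c x _ ih =>
      rw [map_smul, LinearMap.smul_apply]; exact Submodule.smul_mem _ _ ih

lemma mm_central (i k : Idx N) (h : gradeOf i = 0) : mm i k = mm k i := by
  rcases i with (⟨⟩ | a | a) | (p | p | p) | c | c <;>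
  first
    | exact absurd h (by simp only [gradeOf]; decide)
    | (rcases k with (⟨⟩ | b | b) | (q | q | q) | d | d <;> rfl)

lemma central_m {x : V N} (hx : x ∈ Hom (0 : ZMod 3)) :
    ∀ y : V N, m x y = m y x := by
  induction hx using Submodule.span_induction with
  | mem x hx' =>
      obtain ⟨i, hgi, rfl⟩ := hx'
      intro y
      have hmaps : m (e i) = (LinearMap.flip (m (N := N))) (e i) := by
        refine Module.Basis.ext (Pi.basisFun ℂ (Idx N)) fun k => ?_
        show m (e i) (e k) = (LinearMap.flip m) (e i) (e k)
        rw [LinearMap.flip_apply, m_ee, m_ee]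
        exact mm_central i k hgi
      have := DFunLike.congr_fun hmaps y
      simpa using this
  | zero => intro y; simp
  | add x x' _ _ ih ih' =>
      intro y
      rw [map_add, LinearMap.add_apply, ih y, ih' y, ← map_add]
  | smul c x _ ih =>
      intro y
      rw [map_smul, LinearMap.smul_apply, ih y, ← map_smul]

lemma comm12_basis (i k : Idx N) (hi : gradeOf i = 1) (hk : gradeOf k = 2) :
    mm i k = jj • mm k i := by
  rcases i with (⟨⟩ | a | a) | (p | p | p) | c | c <;>
    try exact absurd hi (by simp only [gradeOf]; decide)
  all_goals rcases k with (⟨⟩ | b | b) | (q | q | q) | d | d <;>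
    try exact absurd hk (by simp only [gradeOf]; decide)
  -- remaining: (iL a, iR b), (iL a, iLL q), (iRR p, iR b), (iRR p, iLL q)
  · show e (iLR (a, b)) = jj • ((jj * jj) • e (iLR (a, b)))
    rw [smul_smul, jj_cube, one_smul]
  · exact TL_rot (a, q)
  · exact TR_rot (p.1, p.2, b)
  · show (0 : V N) = jj • (0 : V N)
    rw [smul_zero]

lemma comm12_m {x y : V N} (hx : x ∈ Hom (1 : ZMod 3)) (hy : y ∈ Hom (2 : ZMod 3)) :
    m x y = jj • m y x := by
  induction hx using Submodule.span_induction with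
  | mem x hx' =>
      obtain ⟨i, hgi, rfl⟩ := hx'
      induction hy using Submodule.span_induction with
      | mem y hy' =>
          obtain ⟨k, hgk, rfl⟩ := hy'
          rw [m_ee, m_ee]
          exact comm12_basis i k hgi hgk
      | zero => simp
      | add y y' _ _ ih ih' =>
          rw [map_add, ih, ih', ← smul_add, map_add, LinearMap.add_apply]
      | smul c y _ ih =>
          rw [map_smul, ih, map_smul, LinearMap.smul_apply, smul_comm]
  | zero => simp
  | add x x' _ _ ih ih' =>
      rw [map_add, LinearMap.add_apply, ih, ih', ← smul_add, ← map_add]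
  | smul c x _ ih =>
      rw [map_smul, LinearMap.smul_apply, ih, map_smul, smul_comm]

end Z3
namespace Z3

variable {N : ℕ}

def eGen : Gen N → V N
  | Sum.inl a => e (iL a)
  | Sum.inr a => e (iR a)

lemma eGen_mem (g : Gen N) : eGen g ∈ Hom (genGrade g) := by
  cases g <;> exact e_mem_Hom rfl

def μ : List (Gen N) → V N
  | [] => e iU
  | g :: w => m (eGen g) (μ w)

lemma wGrade_cons (g : Gen N) (w : List (Gen N)) :
    wGrade (g :: w) = genGrade g + wGrade w := by simp [wGrade]

lemma mu_hom (w : List (Gen N)) : μ w ∈ Hom (wGrade w) := by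
  induction w with
  | nil => exact e_mem_Hom rfl
  | cons g w ih =>
      rw [wGrade_cons]
      exact m_grade (eGen_mem g) ih

/-- The representation of the free algebra on the model space. -/
def F : FreeAlgebra ℂ (Gen N) →ₐ[ℂ] Module.End ℂ (V N) :=
  FreeAlgebra.lift ℂ fun g => (m (eGen g) : Module.End ℂ (V N))

lemma F_wProd (w : List (Gen N)) : F (wProd w) = m (μ w) := by
  induction w with
  | nil =>
      show F 1 = _
      rw [map_one]
      refine LinearMap.ext fun v => ?_
      show v = m (e iU) v
      rw [m_eU_left]
  | cons g w ih =>
      rw [wProd_cons, map_mul]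
      have hF : F (FreeAlgebra.ι ℂ g) = m (eGen g) := by
        simp [F, FreeAlgebra.lift_ι_apply]
      rw [hF, ih]
      refine LinearMap.ext fun v => ?_
      rw [Module.End.mul_apply]
      show m (eGen g) (m (μ w) v) = m (μ (g :: w)) v
      exact (massoc _ _ _).symm

lemma hrel : ∀ ⦃x y : FreeAlgebra ℂ (Gen N)⦄, Rel N x y → F x = F y := by
  intro x y h
  cases h with
  | central w₁ w₂ hg =>
      rw [map_mul, map_mul, F_wProd, F_wProd]
      have h0 : μ w₁ ∈ Hom (0 : ZMod 3) := hg ▸ mu_hom w₁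
      refine LinearMap.ext fun v => ?_
      rw [Module.End.mul_apply, Module.End.mul_apply, ← massoc, ← massoc,
        central_m h0 (μ w₂)]
  | comm12 w₁ w₂ h₁ h₂ =>
      rw [map_smul, map_mul, map_mul, F_wProd, F_wProd]
      have hh1 : μ w₁ ∈ Hom (1 : ZMod 3) := h₁ ▸ mu_hom w₁
      have hh2 : μ w₂ ∈ Hom (2 : ZMod 3) := h₂ ▸ mu_hom w₂
      refine LinearMap.ext fun v => ?_
      rw [LinearMap.smul_apply, Module.End.mul_apply, Module.End.mul_apply,
        ← massoc, ← massoc, comm12_m hh1 hh2, map_smul, LinearMap.smul_apply]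

/-- The representation of the Grassmann algebra. -/
def Frq : G N →ₐ[ℂ] Module.End ℂ (V N) :=
  RingQuot.liftAlgHom ℂ ⟨F, hrel⟩

lemma Frq_mk (x : FreeAlgebra ℂ (Gen N)) : Frq (mk N x) = F x := by
  rw [mk, Frq]
  exact RingQuot.liftAlgHom_mkAlgHom_apply ℂ _ _ _

/-- Normal-form word for each basis index. -/
def word : Idx N → List (Gen N)
  | Sum.inl (Sum.inl _) => []
  | Sum.inl (Sum.inr (Sum.inl a)) => [Sum.inl a]
  | Sum.inl (Sum.inr (Sum.inr a)) => [Sum.inr a]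
  | Sum.inr (Sum.inl (Sum.inl p)) => [Sum.inl p.1, Sum.inl p.2]
  | Sum.inr (Sum.inl (Sum.inr (Sum.inl p))) => [Sum.inr p.1, Sum.inr p.2]
  | Sum.inr (Sum.inl (Sum.inr (Sum.inr p))) => [Sum.inl p.1, Sum.inr p.2]
  | Sum.inr (Sum.inr (Sum.inl c)) => [Sum.inl c.1.1, Sum.inl c.1.2.1, Sum.inl c.1.2.2]
  | Sum.inr (Sum.inr (Sum.inr c)) => [Sum.inr c.1.1, Sum.inr c.1.2.1, Sum.inr c.1.2.2]

/-- The normal-form family in the Grassmann algebra. -/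
def bb : Idx N → G N := fun i => mw N (word i)

lemma mu_word (i : Idx N) : μ (word i) = e i := by
  rcases i with (⟨⟩ | a | a) | (p | p | p) | c | c
  · rfl
  · show m (e (iL a)) (e iU) = _
    rw [m_eU_right]
    rfl
  · show m (e (iR a)) (e iU) = _
    rw [m_eU_right]
    rfl
  · show m (e (iL p.1)) (m (e (iL p.2)) (e iU)) = _
    rw [m_eU_right, m_ee]
    rfl
  · show m (e (iR p.1)) (m (e (iR p.2)) (e iU)) = _
    rw [m_eU_right, m_ee]
    rfl
  · show m (e (iL p.1)) (m (e (iR p.2)) (e iU)) = _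
    rw [m_eU_right, m_ee]
    rfl
  · have h1 : μ (word (iTL c)) = TL c.1 := by
      show m (e (iL c.1.1)) (m (e (iL c.1.2.1)) (m (e (iL c.1.2.2)) (e iU))) = TL c.1
      rw [m_eU_right, m_ee,
        show mm (iL c.1.2.1) (iL c.1.2.2) = e (iLL (c.1.2.1, c.1.2.2)) from rfl,
        m_ee]
      rfl
    rw [show μ (word (Sum.inr (Sum.inr (Sum.inl c)))) = μ (word (iTL c)) from rfl, h1]
    rw [TL, dif_neg c.2.1]
    have hc : cpow c.1 = 0 := by simp [cpow, c.2]
    have hcr : crep c.1 = c.1 := by simp [crep, c.2]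
    rw [hc, pow_zero, one_smul]
    have hsub : (⟨crep c.1, crep_canon c.1 c.2.1⟩ : Canon N) = c := Subtype.ext hcr
    rw [hsub]
    rfl
  · have h1 : μ (word (iTR c)) = TR c.1 := by
      show m (e (iR c.1.1)) (m (e (iR c.1.2.1)) (m (e (iR c.1.2.2)) (e iU))) = TR c.1
      rw [m_eU_right, m_ee,
        show mm (iR c.1.2.1) (iR c.1.2.2) = e (iRR (c.1.2.1, c.1.2.2)) from rfl,
        m_ee]
      rfl
    rw [show μ (word (Sum.inr (Sum.inr (Sum.inr c)))) = μ (word (iTR c)) from rfl, h1]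
    rw [TR, dif_neg c.2.1]
    have hc : cpow c.1 = 0 := by simp [cpow, c.2]
    have hcr : crep c.1 = c.1 := by simp [crep, c.2]
    rw [hc, Nat.mul_zero, pow_zero, one_smul]
    have hsub : (⟨crep c.1, crep_canon c.1 c.2.1⟩ : Canon N) = c := Subtype.ext hcr
    rw [hsub]
    rfl

/-- Evaluation of the representation at the vacuum vector. -/
def ψ : G N →ₗ[ℂ] V N :=
  (LinearMap.applyₗ (e (iU : Idx N))).comp (Frq (N := N)).toLinearMap

lemma psi_bb (i : Idx N) : ψ (bb i) = e i := by
  show (Frq (mw N (word i))) (e iU) = e i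
  rw [mw, Frq_mk, F_wProd, mu_word, m_eU_right]

lemma bb_indep : LinearIndependent ℂ (bb : Idx N → G N) := by
  apply LinearIndependent.of_comp (ψ (N := N))
  have h2 : (fun i => ψ (bb i)) = fun i : Idx N => e i := funext psi_bb
  show LinearIndependent ℂ (fun i => ψ (bb i))
  rw [h2]
  exact (Pi.basisFun ℂ (Idx N)).linearIndependent

end Z3
namespace Z3

variable {N : ℕ}

/-- The span of the normal forms. -/
def Sb (N : ℕ) : Submodule ℂ (G N) := Submodule.span ℂ (Set.range (bb (N := N)))

lemma tripL_mem (t : T3 N) :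
    mw N [Sum.inl t.1, Sum.inl t.2.1, Sum.inl t.2.2] ∈ Sb N := by
  by_cases h : rot t = t
  · rcases t with ⟨a, b, c⟩
    have h2 : b = a ∧ c = b ∧ a = c := by simpa [rot, Prod.ext_iff] using h
    obtain ⟨e1, e2, _⟩ := h2
    subst e1; subst e2
    rw [zL3const]
    exact zero_mem _
  · rcases canon_exists t h with hc | hc | hc
    · exact Submodule.subset_span ⟨iTL ⟨t, hc⟩, rfl⟩
    · rw [tripCycL t.1 t.2.1 t.2.2]
      exact Submodule.smul_mem _ _ (Submodule.subset_span ⟨iTL ⟨rot t, hc⟩, rfl⟩)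
    · rw [tripCycL t.1 t.2.1 t.2.2, tripCycL t.2.1 t.2.2 t.1]
      exact Submodule.smul_mem _ _ (Submodule.smul_mem _ _
        (Submodule.subset_span ⟨iTL ⟨rot (rot t), hc⟩, rfl⟩))

lemma tripR_mem (t : T3 N) :
    mw N [Sum.inr t.1, Sum.inr t.2.1, Sum.inr t.2.2] ∈ Sb N := by
  by_cases h : rot t = t
  · rcases t with ⟨a, b, c⟩
    have h2 : b = a ∧ c = b ∧ a = c := by simpa [rot, Prod.ext_iff] using h
    obtain ⟨e1, e2, _⟩ := h2
    subst e1; subst e2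
    rw [zR3const]
    exact zero_mem _
  · rcases canon_exists t h with hc | hc | hc
    · exact Submodule.subset_span ⟨iTR ⟨t, hc⟩, rfl⟩
    · rw [tripCycR t.1 t.2.1 t.2.2, tripCycR t.2.2 t.1 t.2.1]
      exact Submodule.smul_mem _ _ (Submodule.smul_mem _ _
        (Submodule.subset_span ⟨iTR ⟨rot t, hc⟩, rfl⟩))
    · rw [tripCycR t.1 t.2.1 t.2.2]
      exact Submodule.smul_mem _ _ (Submodule.subset_span ⟨iTR ⟨rot (rot t), hc⟩, rfl⟩)

lemma prodCase (g : Gen N) (i : Idx N) : mw N (g :: word i) ∈ Sb N := by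
  rcases g with p | p <;> rcases i with (⟨⟩ | a | a) | (q | q | q) | c | c
  · exact Submodule.subset_span ⟨iL p, rfl⟩
  · exact Submodule.subset_span ⟨iLL (p, a), rfl⟩
  · exact Submodule.subset_span ⟨iLR (p, a), rfl⟩
  · exact tripL_mem (p, q)
  · show mw N [Sum.inl p, Sum.inr q.1, Sum.inr q.2] ∈ Sb N
    rw [zLRR]; exact zero_mem _
  · show mw N [Sum.inl p, Sum.inl q.1, Sum.inr q.2] ∈ Sb N
    rw [zLLR]; exact zero_mem _
  · show mw N [Sum.inl p, Sum.inl c.1.1, Sum.inl c.1.2.1, Sum.inl c.1.2.2] ∈ Sb N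
    rw [zL4]; exact zero_mem _
  · show mw N [Sum.inl p, Sum.inr c.1.1, Sum.inr c.1.2.1, Sum.inr c.1.2.2] ∈ Sb N
    have hsplit : mw N [Sum.inl p, Sum.inr c.1.1, Sum.inr c.1.2.1, Sum.inr c.1.2.2]
        = mw N [Sum.inl p, Sum.inr c.1.1, Sum.inr c.1.2.1] * mw N [Sum.inr c.1.2.2] := by
      simpa using mw_append [Sum.inl p, Sum.inr c.1.1, Sum.inr c.1.2.1] [Sum.inr c.1.2.2]
    rw [hsplit, zLRR, zero_mul]; exact zero_mem _
  · exact Submodule.subset_span ⟨iR p, rfl⟩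
  · show mw N [Sum.inr p, Sum.inl a] ∈ Sb N
    rw [swapG]
    exact Submodule.smul_mem _ _ (Submodule.subset_span ⟨iLR (a, p), rfl⟩)
  · exact Submodule.subset_span ⟨iRR (p, a), rfl⟩
  · show mw N [Sum.inr p, Sum.inl q.1, Sum.inl q.2] ∈ Sb N
    rw [zRLL]; exact zero_mem _
  · exact tripR_mem (p, q)
  · show mw N [Sum.inr p, Sum.inl q.1, Sum.inr q.2] ∈ Sb N
    rw [zRLR]; exact zero_mem _
  · show mw N [Sum.inr p, Sum.inl c.1.1, Sum.inl c.1.2.1, Sum.inl c.1.2.2] ∈ Sb N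
    have hsplit : mw N [Sum.inr p, Sum.inl c.1.1, Sum.inl c.1.2.1, Sum.inl c.1.2.2]
        = mw N [Sum.inr p, Sum.inl c.1.1, Sum.inl c.1.2.1] * mw N [Sum.inl c.1.2.2] := by
      simpa using mw_append [Sum.inr p, Sum.inl c.1.1, Sum.inl c.1.2.1] [Sum.inl c.1.2.2]
    rw [hsplit, zRLL, zero_mul]; exact zero_mem _
  · show mw N [Sum.inr p, Sum.inr c.1.1, Sum.inr c.1.2.1, Sum.inr c.1.2.2] ∈ Sb N
    rw [zR4]; exact zero_mem _

lemma Sb_mul_gen (g : Gen N) : ∀ x ∈ Sb N, mk N (FreeAlgebra.ι ℂ g) * x ∈ Sb N := by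
  intro x hx
  induction hx using Submodule.span_induction with
  | mem x hx' =>
      obtain ⟨i, rfl⟩ := hx'
      have h2 : mk N (FreeAlgebra.ι ℂ g) * bb i = mw N (g :: word i) := by
        rw [bb, mw, mw, wProd_cons, map_mul]
      rw [h2]
      exact prodCase g i
  | zero => rw [mul_zero]; exact zero_mem _
  | add x x' _ _ ih ih' => rw [mul_add]; exact add_mem ih ih'
  | smul c x _ ih => rw [mul_smul_comm]; exact Submodule.smul_mem _ _ ih

lemma mw_mem (w : List (Gen N)) : mw N w ∈ Sb N := by
  induction w with
  | nil => exact Submodule.subset_span ⟨iU, rfl⟩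
  | cons g w ih =>
      have h2 : mw N (g :: w) = mk N (FreeAlgebra.ι ℂ g) * mw N w := by
        rw [mw, mw, wProd_cons, map_mul]
      rw [h2]
      exact Sb_mul_gen g _ ih

lemma Sb_mul : ∀ x ∈ Sb N, ∀ y ∈ Sb N, x * y ∈ Sb N := by
  intro x hx
  induction hx using Submodule.span_induction with
  | mem x hx' =>
      obtain ⟨i, rfl⟩ := hx'
      intro y hy
      induction hy using Submodule.span_induction with
      | mem y hy' =>
          obtain ⟨k, rfl⟩ := hy'
          have h2 : bb i * bb k = mw N (word i ++ word k) := (mw_append _ _).symm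
          rw [h2]
          exact mw_mem _
      | zero => rw [mul_zero]; exact zero_mem _
      | add y y' _ _ ih ih' => rw [mul_add]; exact add_mem ih ih'
      | smul c y _ ih => rw [mul_smul_comm]; exact Submodule.smul_mem _ _ ih
  | zero => intro y hy; rw [zero_mul]; exact zero_mem _
  | add x x' _ _ ih ih' =>
      intro y hy; rw [add_mul]; exact add_mem (ih y hy) (ih' y hy)
  | smul c x _ ih =>
      intro y hy; rw [smul_mul_assoc]; exact Submodule.smul_mem _ _ (ih y hy)

lemma mkA_mem (y : FreeAlgebra ℂ (Gen N)) : RingQuot.mkAlgHom ℂ (Rel N) y ∈ Sb N := by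
  induction y using FreeAlgebra.induction with
  | grade0 r =>
      have h1 : RingQuot.mkAlgHom ℂ (Rel N) (algebraMap ℂ _ r) = r • (1 : G N) := by
        rw [AlgHom.commutes, Algebra.algebraMap_eq_smul_one]
      have h2 : (1 : G N) = bb iU := by
        rw [bb, mw]
        show (1 : G N) = mk N (wProd [])
        rw [wProd_nil, map_one]
      rw [h1, h2]
      exact Submodule.smul_mem _ _ (Submodule.subset_span ⟨iU, rfl⟩)
  | grade1 g =>
      have h1 : RingQuot.mkAlgHom ℂ (Rel N) (FreeAlgebra.ι ℂ g) = mw N [g] := by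
        rw [mw]
        congr 1
        simp [wProd]
      rw [h1]
      exact mw_mem _
  | mul a b ha hb => rw [map_mul]; exact Sb_mul _ ha _ hb
  | add a b ha hb => rw [map_add]; exact add_mem ha hb

lemma span_top : (⊤ : Submodule ℂ (G N)) ≤ Submodule.span ℂ (Set.range (bb (N := N))) := by
  intro x _
  obtain ⟨y, rfl⟩ := RingQuot.mkAlgHom_surjective ℂ (Rel N) x
  exact mkA_mem y

/-- The normal forms are a basis of the Grassmann algebra. -/
noncomputable def basisG : Module.Basis (Idx N) ℂ (G N) := Module.Basis.mk bb_indep span_top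

end Z3

/-- the full `ℤ₃`-graded Grassmann algebra on `N` grade-1 and `N`
grade-2 generators has complex dimension `(3 + 4N + 9N² + 2N³)/3` (stated in
the division-free form `3 * dim = 3 + 4N + 9N² + 2N³`). -/
theorem finrank_Z3_grassmann (N : ℕ) :
    3 * Module.finrank ℂ (Z3.G N) = 3 + 4 * N + 9 * N ^ 2 + 2 * N ^ 3 := by
  classical
  have hb := Module.finrank_eq_card_basis (Z3.basisG (N := N))
  have hcard : Fintype.card (Z3.Idx N)
      = 1 + (N + N) + (N * N + (N * N + N * N))
        + (Fintype.card (Z3.Canon N) + Fintype.card (Z3.Canon N)) := by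
    simp only [Z3.Idx, Fintype.card_sum, Fintype.card_prod, Fintype.card_fin,
      Fintype.card_unit]
    omega
  have h3 := Z3.card_aux (N := N)
  have h3' : (N : ℤ) * N * N = 3 * (Fintype.card (Z3.Canon N) : ℤ) + N := by
    exact_mod_cast h3
  rw [hb, hcard]
  zify
  push_cast
  linear_combination (-2 : ℤ) * h3'
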